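/- Let G be a finite simple graph and X ⊆ V(G) with |X| = k such that G ∖ X is a disjoint union of stars. Then every induced path in G has at most 4k + 3 vertices, i.e., length at most 4k + 2. -/

import Mathlib

open SimpleGraph

variable {V : Type*}

/-- The set of vertices burned by the end of time step `i` (0-indexed: `burnt G s S i` is `B_i`),
when a fire starts at `s` and the firefighter defends the vertices of the list `S` in order. -/
def burnt (G : SimpleGraph V) (s : V) (S : List V) : ℕ → Set V
  | 0 => {s}
  | i + 1 => burnt G s S i ∪
      {u | u ∉ S.take (i + 1) ∧ ∃ b ∈ burnt G s S i, G.Adj u b}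

/-- The set of all vertices ever burned by the strategy `S`. -/
def BurntSet (G : SimpleGraph V) (s : V) (S : List V) : Set V := ⋃ i, burnt G s S i

/-- A strategy is a sequence of pairwise distinct vertices; it is valid if the vertex defended
at each step is not yet burning at the start of that step. -/
def ValidStrategy (G : SimpleGraph V) (s : V) (S : List V) : Prop :=
  S.Nodup ∧ ∀ (i : ℕ) (h : i < S.length), S.get ⟨i, h⟩ ∉ burnt G s S i

/-- The number of vertices saved (i.e. not burned) by the strategy `S`. -/
noncomputable def sav (G : SimpleGraph V) (s : V) (S : List V) : ℕ := (BurntSet G s S)ᶜ.ncard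

/-- A valid strategy is minimal if every proper subsequence of it which is itself a valid
strategy saves strictly fewer vertices. -/
def MinimalStrategy (G : SimpleGraph V) (s : V) (S : List V) : Prop :=
  ValidStrategy G s S ∧ ∀ S' : List V, S'.Sublist S → S' ≠ S → ValidStrategy G s S' →
    sav G s S' < sav G s S

/-- A strategy is optimal if it is minimal and saves the maximum number of vertices. -/
def OptimalStrategy (G : SimpleGraph V) (s : V) (S : List V) : Prop :=
  MinimalStrategy G s S ∧ ∀ S' : List V, ValidStrategy G s S' → sav G s S' ≤ sav G s S

/-- A walk is an induced path if it is a path and the subgraph induced on its vertices has no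
edges besides the edges of the path. -/
def IsInducedPath (G : SimpleGraph V) {a b : V} (p : G.Walk a b) : Prop :=
  p.IsPath ∧ ∀ x ∈ p.support, ∀ y ∈ p.support, G.Adj x y → p.toSubgraph.Adj x y

/-- `u` is reachable from `s` in the subgraph of `G` induced on the complement of `A`. -/
def ReachAvoiding (G : SimpleGraph V) (A : Set V) (s u : V) : Prop :=
  ∃ p : G.Walk s u, ∀ x ∈ p.support, x ∉ A

/-- A graph is a disjoint union of stars if every connected component has a vertex (a center)
adjacent to all other vertices of the component, with the remaining vertices of the component
pairwise non-adjacent. -/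
def IsStarForest {W : Type*} (H : SimpleGraph W) : Prop :=
  ∀ K : H.ConnectedComponent, ∃ c ∈ K.supp,
    (∀ v ∈ K.supp, v ≠ c → H.Adj c v) ∧
    (∀ u ∈ K.supp, ∀ v ∈ K.supp, u ≠ c → v ≠ c → ¬ H.Adj u v)

lemma getVert_injOn' {V : Type*} {G : SimpleGraph V} {a b : V} (p : G.Walk a b)
    (hp : p.IsPath) : ∀ i ≤ p.length, ∀ j ≤ p.length,
      p.getVert i = p.getVert j → i = j := by
  induction p with
  | nil => intro i hi j hj _; simp at hi hj; omega
  | cons h q ih =>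
    rw [SimpleGraph.Walk.cons_isPath_iff] at hp
    intro i hi j hj hij
    match i, j with
    | 0, 0 => rfl
    | 0, j+1 =>
      exfalso; apply hp.2
      rw [SimpleGraph.Walk.mem_support_iff_exists_getVert]
      exact ⟨j, by simpa [SimpleGraph.Walk.getVert_cons_succ] using hij.symm,
        by simpa using hj⟩
    | i+1, 0 =>
      exfalso; apply hp.2
      rw [SimpleGraph.Walk.mem_support_iff_exists_getVert]
      exact ⟨i, by simpa [SimpleGraph.Walk.getVert_cons_succ] using hij,
        by simpa using hi⟩
    | i+1, j+1 =>
      have := ih hp.1 i (by simpa using hi) j (by simpa using hj)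
        (by simpa [SimpleGraph.Walk.getVert_cons_succ] using hij)
      omega

/-- If `X ⊆ V(G)` has size `k` and `G ∖ X` is a disjoint union of stars, then
every induced path in `G` has length at most `4k + 2` (at most `4k + 3` vertices). -/
theorem induced_path_le_of_star_modulator {V : Type*} [Fintype V] (G : SimpleGraph V)
    (X : Finset V) (k : ℕ) (hX : X.card = k)
    (hstar : IsStarForest (G.induce ((↑X : Set V)ᶜ)))
    {a b : V} (p : G.Walk a b) (hp : IsInducedPath G p) :
    p.length ≤ 4 * k + 2 := by
  by_contra hcon
  push_neg at hcon
  have hpath := hp.1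
  have hinjV := getVert_injOn' p hpath
  -- Step 1: among any 4 consecutive vertices, one is in X
  have key : ∀ i, i + 3 ≤ p.length → ∃ m, i ≤ m ∧ m ≤ i + 3 ∧ p.getVert m ∈ X := by
    intro i hi
    by_contra hno
    push_neg at hno
    have hmem : ∀ m, i ≤ m → m ≤ i + 3 → p.getVert m ∈ ((↑X : Set V)ᶜ) :=
      fun m h1 h2 => hno m h1 h2
    set H := G.induce ((↑X : Set V)ᶜ) with hH
    have hmem4 : ∀ m : Fin 4, p.getVert (i + (m : ℕ)) ∈ ((↑X : Set V)ᶜ) := by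
      intro m
      have hm4 := m.isLt
      exact hmem _ (by omega) (by omega)
    let w : Fin 4 → ((↑X : Set V)ᶜ : Set V) :=
      fun m => ⟨p.getVert (i + (m : ℕ)), hmem4 m⟩
    have hadj : ∀ (m : ℕ) (hm : m < 3), H.Adj (w ⟨m, by omega⟩) (w ⟨m+1, by omega⟩) := by
      intro m hm
      have : G.Adj (p.getVert (i + m)) (p.getVert (i + m + 1)) :=
        p.adj_getVert_succ (by omega)
      exact (by simpa [Nat.add_assoc] using this : G.Adj (p.getVert (i + m)) (p.getVert (i + (m + 1))))
    have hne : ∀ m l : Fin 4, m ≠ l → w m ≠ w l := by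
      intro m l hml heq
      have hm4 := m.isLt; have hl4 := l.isLt
      have := hinjV (i + (m : ℕ)) (by omega) (i + (l : ℕ)) (by omega)
        (by simpa [w, Subtype.ext_iff] using heq)
      exact hml (by omega)
    set K := H.connectedComponentMk (w 0) with hK
    have hsupp : ∀ m : Fin 4, w m ∈ K.supp := by
      intro m
      have h01 := hadj 0 (by omega)
      have h12 := hadj 1 (by omega)
      have h23 := hadj 2 (by omega)
      have r : ∀ m : Fin 4, H.Reachable (w 0) (w m) := by
        intro m
        fin_cases m
        · exact Reachable.refl _
        · exact h01.reachable
        · exact h01.reachable.trans h12.reachable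
        · exact (h01.reachable.trans h12.reachable).trans h23.reachable
      simp only [ConnectedComponent.mem_supp_iff, hK]
      exact (ConnectedComponent.sound (r m)).symm
    obtain ⟨c, _, _, hcnon⟩ := hstar K
    have h12 : w 1 = c ∨ w 2 = c := by
      by_contra hh
      push_neg at hh
      exact hcnon _ (hsupp 1) _ (hsupp 2) hh.1 hh.2 (hadj 1 (by omega))
    rcases h12 with h1 | h2
    · exact hcnon _ (hsupp 2) _ (hsupp 3)
        (h1 ▸ hne 2 1 (by decide)) (h1 ▸ hne 3 1 (by decide)) (hadj 2 (by omega))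
    · exact hcnon _ (hsupp 0) _ (hsupp 1)
        (h2 ▸ hne 0 2 (by decide)) (h2 ▸ hne 1 2 (by decide)) (hadj 0 (by omega))
  -- Step 2: counting
  have h4 : ∀ j : Fin (k + 1), ∃ m, 4 * (j : ℕ) ≤ m ∧ m ≤ 4 * (j : ℕ) + 3 ∧ p.getVert m ∈ X := by
    intro j
    exact key (4 * (j : ℕ)) (by have := j.2; omega)
  choose idx h1 h2 h3 using h4
  have hidxle : ∀ j : Fin (k + 1), idx j ≤ p.length := by
    intro j; have := j.2; have := h2 j; omega
  have hinj : Function.Injective (fun j : Fin (k + 1) =>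
      (⟨p.getVert (idx j), h3 j⟩ : {x // x ∈ X})) := by
    intro j1 j2 heq
    have : idx j1 = idx j2 :=
      hinjV _ (hidxle j1) _ (hidxle j2) (by simpa [Subtype.ext_iff] using heq)
    have b1 := h1 j1; have b2 := h2 j1; have b3 := h1 j2; have b4 := h2 j2
    exact Fin.ext (by omega)
  have := Fintype.card_le_of_injective _ hinj
  simp [Fintype.card_coe, hX] at this
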